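/- arXiv:2006.08877 — 2 statements merged into one kernel-verified Lean document; each statement's English description precedes it below -/
import Mathlib

section
/- Let A and H be symmetric positive definite n×n matrices with H = A^{-1}. Let a be a nonzero vector, c > 0, and A⁺ = A + c·aaᵀ. Set s = H a, y = A⁺ s, ρ = 1/(sᵀy). Then the BFGS update H⁺ = (I − ρ s yᵀ) H (I − ρ y sᵀ) + ρ s sᵀ satisfies H⁺ = (A⁺)^{-1}. -/
open Matrix

lemma mul_vecMulVec' {n : ℕ} (M : Matrix (Fin n) (Fin n) ℝ) (u v : Fin n → ℝ) :
    M * vecMulVec u v = vecMulVec (M *ᵥ u) v := by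
  ext i j
  simp [Matrix.mul_apply, vecMulVec_apply, mulVec, dotProduct, Finset.sum_mul, mul_assoc]

lemma vecMulVec_mul' {n : ℕ} (M : Matrix (Fin n) (Fin n) ℝ) (u v : Fin n → ℝ) :
    vecMulVec u v * M = vecMulVec u (v ᵥ* M) := by
  ext i j
  simp [Matrix.mul_apply, vecMulVec_apply, vecMul, dotProduct, Finset.mul_sum, mul_assoc]

lemma vecMulVec_mulVec' {n : ℕ} (u v x : Fin n → ℝ) :
    vecMulVec u v *ᵥ x = (v ⬝ᵥ x) • u := by
  ext i
  simp [mulVec, vecMulVec_apply, dotProduct, Finset.mul_sum, Finset.sum_mul]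
  ring_nf

lemma vecMulVec_mul_vecMulVec' {n : ℕ} (u v x w : Fin n → ℝ) :
    vecMulVec u v * vecMulVec x w = (v ⬝ᵥ x) • vecMulVec u w := by
  ext i j
  simp [Matrix.mul_apply, vecMulVec_apply, dotProduct, Finset.sum_mul]
  ring_nf
  exact Finset.sum_congr rfl fun k _ => by ring

lemma vecMulVec_smul_right' {n : ℕ} (u v : Fin n → ℝ) (c : ℝ) :
    vecMulVec u (c • v) = c • vecMulVec u v := by
  ext i j; simp [vecMulVec_apply]; ring

lemma smul_vecMulVec_left' {n : ℕ} (u v : Fin n → ℝ) (c : ℝ) :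
    vecMulVec (c • u) v = c • vecMulVec u v := by
  ext i j; simp [vecMulVec_apply]; ring

/-- Hessian-action BFGS: with s = Ha, y = A⁺s for a rank-one update A⁺ = A + c·aaᵀ,
the BFGS update H⁺ = (I − ρsyᵀ)H(I − ρysᵀ) + ρssᵀ equals (A⁺)⁻¹. -/
theorem bfgs_hessian_action_inverse {n : ℕ} (A H Aplus Hplus : Matrix (Fin n) (Fin n) ℝ)
    (a s y : Fin n → ℝ) (c ρ : ℝ)
    (hA : A.PosDef) (hH : H.PosDef) (hHA : H = A⁻¹)
    (ha : a ≠ 0) (hc : 0 < c)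
    (hAplus : Aplus = A + c • vecMulVec a a)
    (hs : s = H *ᵥ a) (hy : y = Aplus *ᵥ s)
    (hρ : ρ = 1 / (s ⬝ᵥ y))
    (hHplus : Hplus = (1 - ρ • vecMulVec s y) * H * (1 - ρ • vecMulVec y s)
      + ρ • vecMulVec s s) :
    Hplus = Aplus⁻¹ := by
  set σ : ℝ := a ⬝ᵥ s with hσdef
  have hHsymm : Hᵀ = H := by simpa using hH.1.eq
  have hAsymm : Aᵀ = A := by simpa using hA.1.eq
  have hdet : IsUnit A.det := isUnit_iff_ne_zero.mpr hA.det_pos.ne'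
  have hσpos : 0 < σ := by
    have := hH.dotProduct_mulVec_pos ha
    simpa [hσdef, hs] using this
  -- A *ᵥ s = a
  have hAs : A *ᵥ s = a := by
    rw [hs, hHA, Matrix.mulVec_mulVec, Matrix.mul_nonsing_inv A hdet, Matrix.one_mulVec]
  -- y = (1 + c*σ) • a
  have hy' : y = (1 + c * σ) • a := by
    rw [hy, hAplus, Matrix.add_mulVec, hAs, Matrix.smul_mulVec, vecMulVec_mulVec']
    ext i
    simp [hσdef]
    ring
  have hHy : H *ᵥ y = (1 + c * σ) • s := by
    rw [hy', Matrix.mulVec_smul, ← hs]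
  have hyH : y ᵥ* H = (1 + c * σ) • s := by
    rw [← hHsymm, Matrix.vecMul_transpose, hHy]
  have hsy : s ⬝ᵥ y = (1 + c * σ) * σ := by
    rw [hy', dotProduct_smul, dotProduct_comm, ← hσdef]
    simp [smul_eq_mul]
  have hone : (0:ℝ) < 1 + c * σ := by nlinarith
  have hsyne : s ⬝ᵥ y ≠ 0 := by rw [hsy]; positivity
  have hρ1 : ρ * ((1 + c * σ) * σ) = 1 := by
    rw [hρ, hsy]; field_simp
  -- Sherman--Morrison form of Hplus
  have hHplus' : Hplus = H - (ρ * c * σ) • vecMulVec s s := by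
    have e1 : (ρ • vecMulVec s y) * H = (ρ * (1 + c * σ)) • vecMulVec s s := by
      rw [smul_mul_assoc, vecMulVec_mul', hyH, vecMulVec_smul_right', smul_smul]
    have e2 : H * (ρ • vecMulVec y s) = (ρ * (1 + c * σ)) • vecMulVec s s := by
      rw [mul_smul_comm, mul_vecMulVec', hHy, smul_vecMulVec_left', smul_smul]
    have e3 : vecMulVec s s * (ρ • vecMulVec y s) = (ρ * ((1 + c * σ) * σ)) • vecMulVec s s := by
      rw [mul_smul_comm, vecMulVec_mul_vecMulVec', hsy, smul_smul]
    rw [hHplus, sub_mul, one_mul, mul_sub, mul_one, sub_mul, e1, e2, smul_mul_assoc, e3]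
    match_scalars
    · ring
    · linear_combination (ρ * (1 + c * σ)) * hρ1
  have f1 : H * A = 1 := by rw [hHA, Matrix.nonsing_inv_mul A hdet]
  have f2 : H * vecMulVec a a = vecMulVec s a := by rw [mul_vecMulVec', ← hs]
  have f3 : vecMulVec s s * A = vecMulVec s a := by
    rw [vecMulVec_mul', ← Matrix.mulVec_transpose, hAsymm, hAs]
  have f4 : vecMulVec s s * vecMulVec a a = σ • vecMulVec s a := by
    rw [vecMulVec_mul_vecMulVec', dotProduct_comm, ← hσdef]
  have hmul : Hplus * Aplus = 1 := by
    rw [hHplus', hAplus, sub_mul, mul_add, mul_add, f1, mul_smul_comm, f2,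
      smul_mul_assoc, f3, smul_mul_assoc, mul_smul_comm, f4]
    match_scalars
    any_goals ring
    all_goals linear_combination (-1 : ℝ) * c * hρ1
  exact (Matrix.inv_eq_left_inv hmul).symm
end

section
/- Let H be symmetric positive definite with ‖H‖ ≤ h, and s, y vectors with sᵀy > 0, sᵀs/(sᵀy) ≤ 1/μ₂, and yᵀy/(sᵀy) ≤ 1/(μ₁κ̲). Then the BFGS inverse update H⁺ = (I − ρsyᵀ)H(I − ρysᵀ) + ρssᵀ with ρ = 1/(sᵀy) satisfies ‖H⁺‖ ≤ (1 + 1/√(μ₁μ₂κ̲))² h + 1/μ₂. -/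
set_option synthInstance.maxHeartbeats 1000000
set_option maxHeartbeats 1000000
open Matrix

noncomputable def specNorm {n : ℕ} (A : Matrix (Fin n) (Fin n) ℝ) : ℝ :=
  ‖Matrix.toEuclideanCLM (𝕜 := ℝ) (n := Fin n) A‖

lemma specNorm_vecMulVec_le {n : ℕ} (a b : Fin n → ℝ) :
    specNorm (vecMulVec a b) ≤ Real.sqrt (a ⬝ᵥ a) * Real.sqrt (b ⬝ᵥ b) := by
  unfold specNorm
  apply ContinuousLinearMap.opNorm_le_bound
  · positivity
  · intro x
    set v : Fin n → ℝ := WithLp.equiv 2 (Fin n → ℝ) x with hv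
    have hx : x = (WithLp.equiv 2 (Fin n → ℝ)).symm v := rfl
    rw [hx, show Matrix.toEuclideanCLM (𝕜 := ℝ) (n := Fin n) (vecMulVec a b) ((WithLp.equiv 2 (Fin n → ℝ)).symm v) = (WithLp.equiv 2 (Fin n → ℝ)).symm (Matrix.toLin' (vecMulVec a b) v) from rfl]
    have hmul : Matrix.toLin' (vecMulVec a b) v = (b ⬝ᵥ v) • a := by
      ext i
      simp [Matrix.toLin'_apply, Matrix.mulVec, Matrix.vecMulVec_apply,
        dotProduct, Finset.mul_sum, mul_assoc, mul_comm, Finset.sum_mul]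
    rw [hmul]
    have hsmul : (WithLp.equiv 2 (Fin n → ℝ)).symm ((b ⬝ᵥ v) • a)
        = (b ⬝ᵥ v) • (WithLp.equiv 2 (Fin n → ℝ)).symm a := rfl
    rw [hsmul, norm_smul]
    have hna : ‖(WithLp.equiv 2 (Fin n → ℝ)).symm a‖ = Real.sqrt (a ⬝ᵥ a) := by
      rw [EuclideanSpace.norm_eq]
      congr 1
      simp [dotProduct, Real.norm_eq_abs, sq_abs, sq]
    have hbv : |b ⬝ᵥ v| ≤ Real.sqrt (b ⬝ᵥ b) * ‖x‖ := by
      have h1 : b ⬝ᵥ v = inner ℝ ((WithLp.equiv 2 (Fin n → ℝ)).symm b) x := by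
        rw [hx, WithLp.equiv_symm_apply, EuclideanSpace.inner_toLp_toLp]; simp [dotProduct_comm]
      have h2 : ‖(WithLp.equiv 2 (Fin n → ℝ)).symm b‖ = Real.sqrt (b ⬝ᵥ b) := by
        rw [EuclideanSpace.norm_eq]
        congr 1
        simp [dotProduct, Real.norm_eq_abs, sq_abs, sq]
      calc |b ⬝ᵥ v| = |inner ℝ ((WithLp.equiv 2 (Fin n → ℝ)).symm b) x| := by rw [h1]
        _ ≤ ‖(WithLp.equiv 2 (Fin n → ℝ)).symm b‖ * ‖x‖ := abs_real_inner_le_norm _ _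
        _ = Real.sqrt (b ⬝ᵥ b) * ‖x‖ := by rw [h2]
    rw [Real.norm_eq_abs, hna]
    calc |b ⬝ᵥ v| * Real.sqrt (a ⬝ᵥ a)
        ≤ (Real.sqrt (b ⬝ᵥ b) * ‖x‖) * Real.sqrt (a ⬝ᵥ a) := by
          apply mul_le_mul_of_nonneg_right hbv (Real.sqrt_nonneg _)
      _ = Real.sqrt (a ⬝ᵥ a) * Real.sqrt (b ⬝ᵥ b) * ‖x‖ := by ring

/-- One-step spectral-norm growth bound for the BFGS inverse update under the
skipped-double-damping conditions. -/
theorem lbfgs_H_step_bound {n : ℕ} (H Hplus : Matrix (Fin n) (Fin n) ℝ)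
    (s y : Fin n → ℝ) (h μ₁ μ₂ κ ρ : ℝ)
    (hH : H.PosDef) (hHnorm : specNorm H ≤ h)
    (hμ₁ : 0 < μ₁) (hμ₂ : 0 < μ₂) (hκ : 0 < κ)
    (hsy : 0 < s ⬝ᵥ y)
    (hss : (s ⬝ᵥ s) / (s ⬝ᵥ y) ≤ 1 / μ₂)
    (hyy : (y ⬝ᵥ y) / (s ⬝ᵥ y) ≤ 1 / (μ₁ * κ))
    (hρ : ρ = 1 / (s ⬝ᵥ y))
    (hHplus : Hplus = (1 - ρ • vecMulVec s y) * H * (1 - ρ • vecMulVec y s)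
      + ρ • vecMulVec s s) :
    specNorm Hplus ≤ (1 + 1 / Real.sqrt (μ₁ * μ₂ * κ)) ^ 2 * h + 1 / μ₂ := by
  set f := Matrix.toEuclideanCLM (𝕜 := ℝ) (n := Fin n) with hf
  have hρpos : 0 < ρ := by rw [hρ]; positivity
  have hssnn : 0 ≤ s ⬝ᵥ s := by
    simpa [dotProduct] using Finset.sum_nonneg fun i _ => mul_self_nonneg (s i)
  have hyynn : 0 ≤ y ⬝ᵥ y := by
    simpa [dotProduct] using Finset.sum_nonneg fun i _ => mul_self_nonneg (y i)
  have h0 : 0 ≤ h := le_trans (norm_nonneg _) hHnorm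
  set α := 1 / Real.sqrt (μ₁ * μ₂ * κ) with hα
  have hαnn : 0 ≤ α := by positivity
  have hρss : ρ * (s ⬝ᵥ s) ≤ 1 / μ₂ := by
    calc ρ * (s ⬝ᵥ s) = (s ⬝ᵥ s) / (s ⬝ᵥ y) := by rw [hρ]; ring
      _ ≤ 1 / μ₂ := hss
  have hρyy : ρ * (y ⬝ᵥ y) ≤ 1 / (μ₁ * κ) := by
    calc ρ * (y ⬝ᵥ y) = (y ⬝ᵥ y) / (s ⬝ᵥ y) := by rw [hρ]; ring
      _ ≤ 1 / (μ₁ * κ) := hyy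
  have hαbound : ρ * (Real.sqrt (s ⬝ᵥ s) * Real.sqrt (y ⬝ᵥ y)) ≤ α := by
    have hsr : Real.sqrt ρ * Real.sqrt ρ = ρ := Real.mul_self_sqrt hρpos.le
    have h1 : ρ * (Real.sqrt (s ⬝ᵥ s) * Real.sqrt (y ⬝ᵥ y))
        = Real.sqrt (ρ * (s ⬝ᵥ s)) * Real.sqrt (ρ * (y ⬝ᵥ y)) := by
      rw [Real.sqrt_mul hρpos.le, Real.sqrt_mul hρpos.le]
      linear_combination (-(Real.sqrt (s ⬝ᵥ s) * Real.sqrt (y ⬝ᵥ y))) * hsr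
    rw [h1]
    calc Real.sqrt (ρ * (s ⬝ᵥ s)) * Real.sqrt (ρ * (y ⬝ᵥ y))
        ≤ Real.sqrt (1 / μ₂) * Real.sqrt (1 / (μ₁ * κ)) := by
          apply mul_le_mul (Real.sqrt_le_sqrt hρss) (Real.sqrt_le_sqrt hρyy)
            (Real.sqrt_nonneg _) (Real.sqrt_nonneg _)
      _ = Real.sqrt ((1 / μ₂) * (1 / (μ₁ * κ))) := (Real.sqrt_mul (by positivity) _).symm
      _ = Real.sqrt (1 / (μ₁ * μ₂ * κ)) := by rw [div_mul_div_comm, one_mul]; ring_nf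
      _ = α := by rw [hα, one_div, one_div, Real.sqrt_inv]
  have hone : ‖f (1 : Matrix (Fin n) (Fin n) ℝ)‖ ≤ 1 := by
    rw [_root_.map_one]
    exact ContinuousLinearMap.norm_id_le (E := EuclideanSpace ℝ (Fin n))
  have nsy : ‖f (1 - ρ • vecMulVec s y)‖ ≤ 1 + α := by
    rw [_root_.map_sub, _root_.map_smul]
    calc ‖f 1 - ρ • f (vecMulVec s y)‖ ≤ ‖f 1‖ + ‖ρ • f (vecMulVec s y)‖ := norm_sub_le _ _
      _ = ‖f 1‖ + ρ * ‖f (vecMulVec s y)‖ := by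
          have hns := norm_smul (α := ℝ) ρ (f (vecMulVec s y))
          rw [hns, Real.norm_eq_abs, abs_of_pos hρpos]
      _ ≤ 1 + α := by
          refine add_le_add hone ?_
          calc ρ * ‖f (vecMulVec s y)‖
              ≤ ρ * (Real.sqrt (s ⬝ᵥ s) * Real.sqrt (y ⬝ᵥ y)) :=
                mul_le_mul_of_nonneg_left (specNorm_vecMulVec_le s y) hρpos.le
            _ ≤ α := hαbound
  have nys : ‖f (1 - ρ • vecMulVec y s)‖ ≤ 1 + α := by
    rw [_root_.map_sub, _root_.map_smul]
    calc ‖f 1 - ρ • f (vecMulVec y s)‖ ≤ ‖f 1‖ + ‖ρ • f (vecMulVec y s)‖ := norm_sub_le _ _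
      _ = ‖f 1‖ + ρ * ‖f (vecMulVec y s)‖ := by
          have hns := norm_smul (α := ℝ) ρ (f (vecMulVec y s))
          rw [hns, Real.norm_eq_abs, abs_of_pos hρpos]
      _ ≤ 1 + α := by
          refine add_le_add hone ?_
          calc ρ * ‖f (vecMulVec y s)‖
              ≤ ρ * (Real.sqrt (y ⬝ᵥ y) * Real.sqrt (s ⬝ᵥ s)) :=
                mul_le_mul_of_nonneg_left (specNorm_vecMulVec_le y s) hρpos.le
            _ = ρ * (Real.sqrt (s ⬝ᵥ s) * Real.sqrt (y ⬝ᵥ y)) := by ring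
            _ ≤ α := hαbound
  have nss : ‖f (ρ • vecMulVec s s)‖ ≤ 1 / μ₂ := by
    rw [_root_.map_smul]
    have hns := norm_smul (α := ℝ) ρ (f (vecMulVec s s))
    rw [hns, Real.norm_eq_abs, abs_of_pos hρpos]
    calc ρ * ‖f (vecMulVec s s)‖
        ≤ ρ * (Real.sqrt (s ⬝ᵥ s) * Real.sqrt (s ⬝ᵥ s)) :=
          mul_le_mul_of_nonneg_left (specNorm_vecMulVec_le s s) hρpos.le
      _ = ρ * (s ⬝ᵥ s) := by rw [Real.mul_self_sqrt hssnn]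
      _ ≤ 1 / μ₂ := hρss
  have main : specNorm Hplus ≤ (1 + α) * h * (1 + α) + 1 / μ₂ := by
    unfold specNorm
    rw [hHplus, _root_.map_add, _root_.map_mul, _root_.map_mul]
    calc ‖f (1 - ρ • vecMulVec s y) * f H * f (1 - ρ • vecMulVec y s) + f (ρ • vecMulVec s s)‖
        ≤ ‖f (1 - ρ • vecMulVec s y) * f H * f (1 - ρ • vecMulVec y s)‖
          + ‖f (ρ • vecMulVec s s)‖ := norm_add_le _ _
      _ ≤ ‖f (1 - ρ • vecMulVec s y)‖ * ‖f H‖ * ‖f (1 - ρ • vecMulVec y s)‖ + 1 / μ₂ := by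
          refine add_le_add ?_ nss
          calc ‖f (1 - ρ • vecMulVec s y) * f H * f (1 - ρ • vecMulVec y s)‖
              ≤ ‖f (1 - ρ • vecMulVec s y) * f H‖ * ‖f (1 - ρ • vecMulVec y s)‖ :=
                norm_mul_le _ _
            _ ≤ ‖f (1 - ρ • vecMulVec s y)‖ * ‖f H‖ * ‖f (1 - ρ • vecMulVec y s)‖ :=
                mul_le_mul_of_nonneg_right (norm_mul_le _ _) (norm_nonneg _)
      _ ≤ (1 + α) * h * (1 + α) + 1 / μ₂ := by
          have hfH : ‖f H‖ ≤ h := hHnorm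
          gcongr
  calc specNorm Hplus ≤ (1 + α) * h * (1 + α) + 1 / μ₂ := main
    _ = (1 + α) ^ 2 * h + 1 / μ₂ := by ring
end
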